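/- Let L be a finite ranked lattice of rank r with nonvanishing Möbius function, and let 0 ≤ d ≤ r. Then every family F ⊆ L of VC dimension at most d has at most as many elements as there are elements of L of rank at most d. Moreover, the family F_d of all elements of rank ≤ d has VC dimension exactly d, so the bound is tight. -/

import Mathlib

open scoped Classical

/-- `F` shatters `z`: for every `x ≤ z` there is `w ∈ F` with `w ⊓ z = x`. -/
def Shatters {L : Type*} [SemilatticeInf L] (F : Set L) (z : L) : Prop :=
  ∀ x ≤ z, ∃ w ∈ F, w ⊓ z = x

/-- The set of elements shattered by `F`. -/
def Str {L : Type*} [SemilatticeInf L] (F : Set L) : Set L := {z | Shatters F z}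


/-- The Möbius function of a finite poset. -/
noncomputable def mu {L : Type*} [PartialOrder L] [Fintype L] (x y : L) : ℚ :=
  if x = y then 1
  else if x ≤ y then
    - ∑ z ∈ (Finset.univ.filter fun z => x ≤ z ∧ z < y).attach, mu x z.1
  else 0
termination_by (Finset.univ.filter fun z : L => z < y).card
decreasing_by
  · have hz := (Finset.mem_filter.mp z.2).2.2
    apply Finset.card_lt_card
    constructor
    · intro w hw
      simp only [Finset.mem_filter, Finset.mem_univ, true_and] at hw ⊢
      exact hw.trans hz
    · intro hsub
      have hmem : z.1 ∈ Finset.univ.filter fun w : L => w < y := by simp [hz]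
      have := hsub hmem
      simp at this

section SSPAux
open Finset

section Aux
variable {L : Type*} [PartialOrder L] [Fintype L]

lemma mu_refl (x : L) : mu x x = 1 := by rw [mu]; simp

lemma mu_sum (x y : L) :
    ∑ z ∈ univ.filter (fun z => x ≤ z ∧ z ≤ y), mu x z = if x = y then 1 else 0 := by
  by_cases hxy : x ≤ y
  · by_cases he : x = y
    · subst he
      have h1 : univ.filter (fun z => x ≤ z ∧ z ≤ x) = {x} := by
        ext z; simp; constructor
        · rintro ⟨h1, h2⟩; exact le_antisymm h2 h1
        · rintro rfl; exact ⟨le_rfl, le_rfl⟩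
      rw [h1]; simp [mu_refl]
    · have hset : univ.filter (fun z => x ≤ z ∧ z ≤ y)
          = insert y (univ.filter fun z => x ≤ z ∧ z < y) := by
        ext z
        simp only [mem_filter, mem_univ, true_and, mem_insert]
        constructor
        · rintro ⟨h1, h2⟩
          rcases eq_or_lt_of_le h2 with h | h
          · exact Or.inl h
          · exact Or.inr ⟨h1, h⟩
        · rintro (rfl | ⟨h1, h2⟩)
          · exact ⟨hxy, le_rfl⟩
          · exact ⟨h1, h2.le⟩
      rw [hset, Finset.sum_insert (by simp)]
      have hmu : mu x y = - ∑ z ∈ (univ.filter fun z => x ≤ z ∧ z < y).attach, mu x z.1 := by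
        rw [mu]; simp [he, hxy]
      rw [hmu, Finset.sum_attach _ (fun z => mu x z)]
      simp [he]
  · have hset : univ.filter (fun z : L => x ≤ z ∧ z ≤ y) = ∅ := by
      ext z; simp only [mem_filter, mem_univ, true_and, notMem_empty, iff_false]
      rintro ⟨h1, h2⟩; exact hxy (h1.trans h2)
    have hne : x ≠ y := fun h => hxy (h ▸ le_rfl)
    rw [hset]; simp [hne]

end Aux

section Inf
variable {L : Type*} [Lattice L] [Fintype L]

lemma sum_mu_inf (x₀ y w : L) :
    ∑ x ∈ univ.filter (fun x => x₀ ≤ x ∧ x ≤ y), mu x₀ x * (if x ≤ w then (1:ℚ) else 0)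
      = if x₀ = y ⊓ w then 1 else 0 := by
  have h1 : ∀ x : L, mu x₀ x * (if x ≤ w then (1:ℚ) else 0)
      = if x ≤ w then mu x₀ x else 0 := by
    intro x; split <;> simp
  simp_rw [h1]
  rw [← Finset.sum_filter, Finset.filter_filter]
  have h2 : filter (fun a : L => (x₀ ≤ a ∧ a ≤ y) ∧ a ≤ w) univ
      = filter (fun x => x₀ ≤ x ∧ x ≤ y ⊓ w) univ := by
    ext x; simp only [mem_filter, mem_univ, true_and, le_inf_iff]; tauto
  rw [h2, mu_sum]

end Inf

section Rank
variable {L : Type*} [PartialOrder L] [Fintype L]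

lemma exists_le_covby {x y : L} (h : x < y) : ∃ z, x ≤ z ∧ z ⋖ y := by
  obtain ⟨z, hz, hmax⟩ :=
    (univ.filter (fun z : L => x ≤ z ∧ z < y)).exists_maximal ⟨x, by simp [h, h.le]⟩
  simp only [mem_filter, mem_univ, true_and] at hz
  refine ⟨z, hz.1, hz.2, ?_⟩
  intro c hzc hcy
  exact not_le_of_gt hzc (hmax (by simp [hz.1.trans hzc.le, hcy]) hzc.le)

lemma rank_strictMono (r : L → ℕ) (hrcov : ∀ x y : L, x ⋖ y → r y = r x + 1) :
    ∀ y x : L, x < y → r x < r y := by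
  intro y
  induction y using WellFoundedLT.induction with
  | ind y IH =>
    intro x hxy
    obtain ⟨z, hxz, hzy⟩ := exists_le_covby hxy
    rw [hrcov z y hzy]
    rcases eq_or_lt_of_le hxz with rfl | h
    · omega
    · have := IH z hzy.lt x h; omega

lemma exists_rank_eq [OrderBot L] (r : L → ℕ) (hr0 : r ⊥ = 0)
    (hrcov : ∀ x y : L, x ⋖ y → r y = r x + 1) :
    ∀ (y : L) (k : ℕ), k ≤ r y → ∃ z, z ≤ y ∧ r z = k := by
  intro y
  induction y using WellFoundedLT.induction with
  | ind y IH =>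
    intro k hk
    rcases eq_or_lt_of_le hk with h | h
    · exact ⟨y, le_rfl, h.symm⟩
    · have hy : (⊥ : L) < y := by
        rcases eq_or_lt_of_le (bot_le (a := y)) with rfl | h'
        · omega
        · exact h'
      obtain ⟨z, _, hzy⟩ := exists_le_covby hy
      have hrz : r y = r z + 1 := hrcov z y hzy
      obtain ⟨w, hw, hww⟩ := IH z hzy.lt k (by omega)
      exact ⟨w, hw.trans hzy.lt.le, hww⟩

end Rank

section Main
variable {L : Type*} [Lattice L] [Fintype L] [BoundedOrder L]

lemma ncard_le_ncard_str (hmu : ∀ x y : L, x ≤ y → mu x y ≠ 0) (F : Set L) :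
    F.ncard ≤ (Str F).ncard := by
  classical
  haveI : Fintype F := F.toFinite.fintype
  set γ : L → (F → ℚ) := fun z w => if z ≤ (w : L) then 1 else 0 with hγ
  have key : ∀ z : L, γ z ∈ Submodule.span ℚ (γ '' Str F) := by
    intro z
    induction z using WellFoundedLT.induction with
    | ind z IH =>
      by_cases hz : z ∈ Str F
      · exact Submodule.subset_span (Set.mem_image_of_mem _ hz)
      · have hz' : ¬ ∀ x ≤ z, ∃ w ∈ F, w ⊓ z = x := hz
        push_neg at hz'
        obtain ⟨x₀, hx₀z, hx₀⟩ := hz'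
        have hsum : ∑ x ∈ univ.filter (fun x => x₀ ≤ x ∧ x ≤ z), mu x₀ x • γ x = 0 := by
          ext w
          simp only [Finset.sum_apply, Pi.smul_apply, smul_eq_mul, Pi.zero_apply, hγ]
          rw [sum_mu_inf x₀ z (w : L)]
          have hne : x₀ ≠ z ⊓ (w : L) := by
            intro h
            exact hx₀ (w : L) w.2 (by rw [inf_comm]; exact h.symm)
          simp [hne]
        have hzS : z ∈ univ.filter (fun x : L => x₀ ≤ x ∧ x ≤ z) := by simp [hx₀z]
        have hins : univ.filter (fun x : L => x₀ ≤ x ∧ x ≤ z)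
            = insert z (univ.filter (fun x : L => x₀ ≤ x ∧ x < z)) := by
          ext x
          simp only [mem_filter, mem_univ, true_and, mem_insert]
          constructor
          · rintro ⟨h1, h2⟩
            rcases eq_or_lt_of_le h2 with h | h
            · exact Or.inl h
            · exact Or.inr ⟨h1, h⟩
          · rintro (rfl | ⟨h1, h2⟩)
            · exact ⟨hx₀z, le_rfl⟩
            · exact ⟨h1, h2.le⟩
        rw [hins, Finset.sum_insert (by simp)] at hsum
        have heq : mu x₀ z • γ z = - ∑ x ∈ univ.filter (fun x : L => x₀ ≤ x ∧ x < z),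
            mu x₀ x • γ x := by
          rw [eq_neg_iff_add_eq_zero]; exact hsum
        have hmem : mu x₀ z • γ z ∈ Submodule.span ℚ (γ '' Str F) := by
          rw [heq]
          apply neg_mem
          apply Submodule.sum_mem
          intro x hx
          simp only [mem_filter, mem_univ, true_and] at hx
          exact Submodule.smul_mem _ _ (IH x hx.2)
        have h0 := hmu x₀ z hx₀z
        have := Submodule.smul_mem _ (mu x₀ z)⁻¹ hmem
        rwa [smul_smul, inv_mul_cancel₀ h0, one_smul] at this
  have hspan : Submodule.span ℚ (γ '' Str F) = ⊤ := by
    rw [eq_top_iff]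
    intro f _
    rw [pi_eq_sum_univ f]
    apply Submodule.sum_mem
    intro i _
    apply Submodule.smul_mem
    have hdelta : (fun j : F => if i = j then (1:ℚ) else 0)
        = ∑ z ∈ univ.filter (fun z : L => (i : L) ≤ z ∧ z ≤ ⊤), mu (i : L) z • γ z := by
      ext w
      simp only [Finset.sum_apply, Pi.smul_apply, smul_eq_mul, hγ]
      rw [sum_mu_inf (i : L) ⊤ (w : L), top_inf_eq]
      simp [Subtype.ext_iff, eq_comm]
    rw [hdelta]
    exact Submodule.sum_mem _ fun z _ => Submodule.smul_mem _ _ (key z)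
  haveI : Fintype (γ '' Str F) := (Set.toFinite _).fintype
  haveI : Fintype (Str F) := (Set.toFinite _).fintype
  have h1 := finrank_span_le_card (R := ℚ) (γ '' Str F)
  rw [hspan, finrank_top, Module.finrank_pi] at h1
  calc F.ncard = Fintype.card F := by
        rw [Set.ncard_eq_toFinset_card', Set.toFinset_card]
    _ ≤ (γ '' Str F).toFinset.card := h1
    _ = (γ '' Str F).ncard := (Set.ncard_eq_toFinset_card' _).symm
    _ ≤ (Str F).ncard := Set.ncard_image_le (Set.toFinite _)

end Main


end SSPAux

/-- Sauer–Shelah–Perles for ranked lattices with nonvanishing Möbius function: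
a family of VC dimension at most `d` has at most as many elements as there are elements
of rank at most `d`, and the family of all elements of rank at most `d` has VC
dimension exactly `d`, so the bound is tight. -/
theorem sauer_shelah_perles {L : Type*} [Lattice L] [Fintype L] [BoundedOrder L]
    (r : L → ℕ) (hr0 : r ⊥ = 0) (hrcov : ∀ x y : L, x ⋖ y → r y = r x + 1)
    (hmu : ∀ x y : L, x ≤ y → mu x y ≠ 0)
    (d : ℕ) (hd : d ≤ r ⊤)
    (F : Set L) (hVC : ∀ z, Shatters F z → r z ≤ d) :
    F.ncard ≤ {x : L | r x ≤ d}.ncard ∧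
    (∀ z, Shatters {x : L | r x ≤ d} z → r z ≤ d) ∧
    (∃ z, Shatters {x : L | r x ≤ d} z ∧ r z = d) := by
  have hmono : ∀ x y : L, x ≤ y → r x ≤ r y := by
    intro x y h
    rcases eq_or_lt_of_le h with rfl | h
    · exact le_rfl
    · exact (rank_strictMono r hrcov y x h).le
  refine ⟨?_, ?_, ?_⟩
  · exact (ncard_le_ncard_str hmu F).trans
      (Set.ncard_le_ncard (fun z hz => hVC z hz) (Set.toFinite _))
  · intro z hz
    obtain ⟨w, hw, hwz⟩ := hz z le_rfl
    exact le_trans (hmono z w (inf_eq_right.mp hwz)) hw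
  · obtain ⟨z, _, hz⟩ := exists_rank_eq r hr0 hrcov ⊤ d hd
    refine ⟨z, ?_, hz⟩
    intro x hx
    exact ⟨x, (hmono x z hx).trans_eq hz, inf_eq_left.mpr hx⟩
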